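/- Let ν ≥ 1/2 and let a_n be the Taylor coefficients of z·B_ν(z) (a_1 = 1, a_n = Γ(ν+1) Γ(n/2) / (√π (n−1)! Γ((n+1)/2 + ν)) for n ≥ 2). Then for all n ≥ 1, n·a_n − (n+1)·a_{n+1} ≥ 0. -/

import Mathlib

open Real

lemma gamma_mul_le {a b t : ℝ} (ha : 0 < a) (hab : a ≤ b) (ht : 0 ≤ t) :
    Gamma (a + t) * Gamma b ≤ Gamma a * Gamma (b + t) := by
  have hb : 0 < b := lt_of_lt_of_le ha hab
  rcases eq_or_lt_of_le ht with rfl | ht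
  · rw [add_zero, add_zero, mul_comm]
  rcases eq_or_lt_of_le hab with rfl | hab
  · rw [mul_comm]
  · set d : ℝ := b - a + t with hd
    have hdpos : 0 < d := by simp [hd]; linarith
    set l : ℝ := (b - a) / d with hl
    set m : ℝ := t / d with hm
    have hl0 : 0 ≤ l := div_nonneg (by linarith) hdpos.le
    have hm0 : 0 ≤ m := by positivity
    have hlm : l + m = 1 := by rw [hl, hm, ← add_div, div_eq_one_iff_eq hdpos.ne', hd]
    have hmema : a ∈ Set.Ioi (0:ℝ) := ha
    have hmemb : b + t ∈ Set.Ioi (0:ℝ) := by simp; linarith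
    have h1 := convexOn_log_Gamma.2 hmema hmemb hl0 hm0 hlm
    have h2 := convexOn_log_Gamma.2 hmema hmemb hm0 hl0 (by linarith)
    have e1 : l • a + m • (b + t) = a + t := by
      simp only [smul_eq_mul, hl, hm]; field_simp; ring
    have e2 : m • a + l • (b + t) = b := by
      simp only [smul_eq_mul, hl, hm]; field_simp; ring
    rw [e1] at h1
    rw [e2] at h2
    simp only [Function.comp, smul_eq_mul] at h1 h2
    have key : log (Gamma (a + t)) + log (Gamma b) ≤ log (Gamma a) + log (Gamma (b + t)) := by
      have h3 := add_le_add h1 h2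
      have h4 : l * log (Gamma a) + m * log (Gamma (b + t)) + (m * log (Gamma a) + l * log (Gamma (b + t))) = log (Gamma a) + log (Gamma (b + t)) := by
        linear_combination (log (Gamma a) + log (Gamma (b + t))) * hlm
      linarith
    have ga := Gamma_pos_of_pos ha
    have gb := Gamma_pos_of_pos hb
    have gat := Gamma_pos_of_pos (by linarith : (0:ℝ) < a + t)
    have gbt := Gamma_pos_of_pos (by linarith : (0:ℝ) < b + t)
    calc Gamma (a + t) * Gamma b = exp (log (Gamma (a+t)) + log (Gamma b)) := by
          rw [exp_add, exp_log gat, exp_log gb]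
      _ ≤ exp (log (Gamma a) + log (Gamma (b+t))) := exp_le_exp.2 key
      _ = Gamma a * Gamma (b + t) := by rw [exp_add, exp_log ga, exp_log gbt]

theorem coeff_first_difference_nonneg (ν : ℝ) (hν : 1/2 ≤ ν) (a : ℕ → ℝ) (ha1 : a 1 = 1)
    (ha : ∀ n : ℕ, 2 ≤ n → a n = Real.Gamma (ν + 1) * Real.Gamma ((n : ℝ) / 2) /
      (Real.sqrt Real.pi * ((n - 1).factorial : ℝ) * Real.Gamma (((n : ℝ) + 1) / 2 + ν))) :
    ∀ n : ℕ, 1 ≤ n → (n : ℝ) * a n - ((n : ℝ) + 1) * a (n + 1) ≥ 0 := by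
  have hπ : (0:ℝ) < Real.sqrt Real.pi := Real.sqrt_pos.2 Real.pi_pos
  have hG32 : Gamma (3/2 : ℝ) = Real.sqrt Real.pi / 2 := by
    have : (3/2 : ℝ) = 1/2 + 1 := by norm_num
    rw [this, Gamma_add_one (by norm_num), Gamma_one_half_eq]; ring
  intro n hn
  rcases eq_or_lt_of_le hn with h1 | h2
  · -- n = 1
    have hn1 : n = 1 := h1.symm
    subst hn1
    have ha2 := ha 2 le_rfl
    norm_num at ha2
    have key := gamma_mul_le (a := (3/2 : ℝ)) (b := ν + 1) (t := 1/2)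
      (by norm_num) (by linarith) (by norm_num)
    rw [hG32] at key
    norm_num at key
    -- key : Gamma (ν + 1) ≤ √π / 2 * Gamma (ν + 1 + 1/2)
    have hGpos : (0:ℝ) < Gamma (3/2 + ν) := Gamma_pos_of_pos (by linarith)
    have harg : ν + 1 + 1/2 = 3/2 + ν := by ring
    rw [harg] at key
    rw [ha1, ha2, ge_iff_le, sub_nonneg]
    push_cast
    rw [mul_one, ← mul_div_assoc, div_le_one (by positivity)]
    linarith
  · -- n ≥ 2
    have hn2 : 2 ≤ n := h2
    have hn2' : (2:ℝ) ≤ (n:ℝ) := by exact_mod_cast hn2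
    have han := ha n hn2
    have han1 := ha (n+1) (by omega)
    simp only [Nat.add_sub_cancel] at han1
    push_cast at han1
    have hfc : ((n.factorial : ℕ) : ℝ) = (n:ℝ) * (((n-1).factorial : ℕ) : ℝ) := by
      rcases n with _ | m
      · omega
      · simp [Nat.factorial_succ]
    have key := gamma_mul_le (a := (n:ℝ)/2) (b := ((n:ℝ)+1)/2 + ν) (t := 1/2)
      (by positivity) (by linarith) (by norm_num)
    have e1 : (n:ℝ)/2 + 1/2 = ((n:ℝ)+1)/2 := by ring
    have e2 : ((n:ℝ)+1)/2 + ν + 1/2 = ((n:ℝ)+1+1)/2 + ν := by ring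
    rw [e1, e2] at key
    have p1 : (0:ℝ) < Gamma ((n:ℝ)/2) := Gamma_pos_of_pos (by positivity)
    have p2 : (0:ℝ) < Gamma (((n:ℝ)+1)/2 + ν) := Gamma_pos_of_pos (by positivity)
    have p3 : (0:ℝ) < Gamma (((n:ℝ)+1)/2) := Gamma_pos_of_pos (by positivity)
    have p4 : (0:ℝ) < Gamma (((n:ℝ)+1+1)/2 + ν) := Gamma_pos_of_pos (by positivity)
    have pν : (0:ℝ) < Gamma (ν + 1) := Gamma_pos_of_pos (by linarith)
    have pf : (0:ℝ) < (((n-1).factorial : ℕ) : ℝ) := by positivity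
    rw [ge_iff_le, sub_nonneg, han, han1, ← mul_div_assoc, ← mul_div_assoc,
      div_le_div_iff₀ (by positivity) (by positivity), hfc]
    have hnsq : (n:ℝ) + 1 ≤ (n:ℝ)^2 := by nlinarith
    have main : ((n:ℝ)+1) * (Gamma (((n:ℝ)+1)/2) * Gamma (((n:ℝ)+1)/2 + ν)) ≤
        (n:ℝ)^2 * (Gamma ((n:ℝ)/2) * Gamma (((n:ℝ)+1+1)/2 + ν)) := by
      apply mul_le_mul hnsq key (by positivity) (by positivity)
    calc ((n:ℝ)+1) * (Gamma (ν+1) * Gamma (((n:ℝ)+1)/2)) *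
          (Real.sqrt Real.pi * (((n-1).factorial : ℕ) : ℝ) * Gamma (((n:ℝ)+1)/2 + ν))
        = (Real.sqrt Real.pi * (((n-1).factorial : ℕ) : ℝ) * Gamma (ν+1)) *
          (((n:ℝ)+1) * (Gamma (((n:ℝ)+1)/2) * Gamma (((n:ℝ)+1)/2 + ν))) := by ring
      _ ≤ (Real.sqrt Real.pi * (((n-1).factorial : ℕ) : ℝ) * Gamma (ν+1)) *
          ((n:ℝ)^2 * (Gamma ((n:ℝ)/2) * Gamma (((n:ℝ)+1+1)/2 + ν))) :=
          mul_le_mul_of_nonneg_left main (by positivity)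
      _ = (n:ℝ) * (Gamma (ν+1) * Gamma ((n:ℝ)/2)) *
          (Real.sqrt Real.pi * ((n:ℝ) * (((n-1).factorial : ℕ) : ℝ)) * Gamma (((n:ℝ)+1+1)/2 + ν)) := by ring
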